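/- For every integer n ≥ 2 and every subset S ⊆ {1,…,n−1}, the generating polynomial of the statistic cro over the sequences in W_n whose dot set equals S satisfies Σ_{w ∈ W_n, Dot(w) = S} t^{cro(w)} = φ_{S,n}(t). (In particular, if S contains 1 or contains two consecutive integers, there is no w ∈ W_n with Dot(w) = S and both sides are 0.) -/

import Mathlib

open Polynomial Finset

/-- `[m]_t = 1 + t + ⋯ + t^(m-1)`, with `[0]_t = 0`. -/
noncomputable def qnum (m : ℕ) : Polynomial ℤ := ∑ i ∈ Finset.range m, X ^ i

/-- Given the previous value `prev` and a (sorted) list `s₁, …, s_ℓ`, the product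
`[s₁ - prev - 1]_t · [s₂ - s₁ - 1]_t ⋯ [s_ℓ - s_{ℓ-1} - 1]_t`. -/
noncomputable def gapProd : ℕ → List ℕ → Polynomial ℤ
  | _, [] => 1
  | prev, s :: rest => qnum (s - prev - 1) * gapProd s rest

/-- `S` contains no two consecutive integers. -/
def NoTwoConsec (S : Finset ℕ) : Prop := ∀ i ∈ S, i + 1 ∉ S

instance (S : Finset ℕ) : Decidable (NoTwoConsec S) :=
  inferInstanceAs (Decidable (∀ i ∈ S, i + 1 ∉ S))

/-- The polynomial `φ_{S,n}(t) ∈ ℤ[t]`. -/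
noncomputable def phi (n : ℕ) (S : Finset ℕ) : Polynomial ℤ :=
  if S ⊆ Finset.Icc 2 (n - 1) ∧ NoTwoConsec S then
    X ^ S.card * gapProd 0 (S.sort (· ≤ ·)) *
      (if n - 1 ∈ S then 1 else qnum (n - S.sup id))
  else 0

/-- The three symbols `•` (dot), `×` (cross), `␣` (blank). -/
inductive Mark : Type where
  | dot : Mark
  | cross : Mark
  | blank : Mark
  deriving DecidableEq

instance : Fintype Mark where
  elems := {Mark.dot, Mark.cross, Mark.blank}
  complete := fun x => by cases x <;> simp

/-- The letter `w_i` (positions numbered `1, …, m`) of a sequence encoded as a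
function `Fin m → Mark`; out-of-range positions read as blank. -/
def letterAt {m : ℕ} (w : Fin m → Mark) (i : ℕ) : Mark :=
  if h : 1 ≤ i ∧ i ≤ m then w ⟨i - 1, by omega⟩ else Mark.blank

/-- Membership in `W_n`: `w = w₁ … w_{n-1}` satisfies
(i) if `w_i = •` then `i ≥ 2` and `w_{i-1} = ×`;
(ii) a cross in position `j ≤ n-2` is immediately followed by a cross or a dot. -/
def IsW (n : ℕ) (w : Fin (n - 1) → Mark) : Prop :=
  (∀ i, letterAt w i = Mark.dot → 2 ≤ i ∧ letterAt w (i - 1) = Mark.cross) ∧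
  (∀ j, j ≤ n - 2 → letterAt w j = Mark.cross →
    letterAt w (j + 1) = Mark.cross ∨ letterAt w (j + 1) = Mark.dot)

/-- `Dot(w)`, the set of positions carrying a dot. -/
def DotSet (n : ℕ) (w : Fin (n - 1) → Mark) : Finset ℕ :=
  (Finset.Icc 1 (n - 1)).filter fun i => letterAt w i = Mark.dot

/-- `cro(w)`, the number of crosses. -/
def cro (n : ℕ) (w : Fin (n - 1) → Mark) : ℕ :=
  ((Finset.Icc 1 (n - 1)).filter fun i => letterAt w i = Mark.cross).card


-- helpers
lemma qnum_zero : qnum 0 = 0 := by simp [qnum]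

lemma qnum_one : qnum 1 = 1 := by simp [qnum]

lemma qnum_succ (k : ℕ) : qnum (k + 1) = qnum k + X ^ k := by
  simp [qnum, Finset.sum_range_succ]

lemma qnum_rec (k : ℕ) : qnum (k + 2) = (1 + X) * qnum (k + 1) - X * qnum k := by
  rw [qnum_succ, qnum_succ]; ring

lemma getLastD_eq_getLast : ∀ (l : List ℕ) (h : l ≠ []) (d : ℕ), l.getLastD d = l.getLast h
  | [a], _, d => rfl
  | a :: b :: t, _, d => by
      rw [List.getLastD_cons, List.getLast_cons (by simp)]
      exact getLastD_eq_getLast (b :: t) (by simp) a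

lemma sup_id_eq_getLastD (S : Finset ℕ) : S.sup id = (S.sort (· ≤ ·)).getLastD 0 := by
  rcases S.eq_empty_or_nonempty with rfl | h
  · simp
  · have hl : S.sort (· ≤ ·) ≠ [] := by
      have := Finset.length_sort (α := ℕ) (· ≤ ·) (s := S)
      intro hnil
      rw [hnil] at this
      simp only [List.length_nil] at this
      exact h.ne_empty (Finset.card_eq_zero.mp this.symm)
    rw [getLastD_eq_getLast _ hl, List.getLast_eq_getElem]
    have h1 : S.max' h = (S.sort (· ≤ ·))[(S.sort (· ≤ ·)).length - 1]'
        (by simpa using Nat.sub_lt (Finset.card_pos.mpr h) Nat.zero_lt_one) :=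
      Finset.max'_eq_sorted_last
    rw [← h1]
    rw [Finset.max'_eq_sup' , Finset.sup'_eq_sup]

lemma sort_insert_max {S : Finset ℕ} {b : ℕ} (hb : ∀ x ∈ S, x < b) :
    (insert b S).sort (· ≤ ·) = S.sort (· ≤ ·) ++ [b] := by
  have hbS : b ∉ S := fun h => lt_irrefl b (hb b h)
  apply (fun hp hs => List.Perm.eq_of_pairwise' (Finset.pairwise_sort _ _) hs hp :
      List.Perm _ (S.sort (· ≤ ·) ++ [b]) → List.Pairwise (· ≤ ·) (S.sort (· ≤ ·) ++ [b]) → _)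
  · refine ((insert b S).sort_perm_toList (· ≤ ·)).trans ?_
    refine (List.Perm.trans ?_ (List.perm_append_singleton b _).symm)
    refine List.Perm.trans (Finset.toList_insert hbS) ?_
    exact ((S.sort_perm_toList (· ≤ ·)).symm.cons b)
  · rw [List.pairwise_append]
    refine ⟨Finset.pairwise_sort _ _, List.pairwise_singleton _ b, ?_⟩
    intro x hx y hy
    simp at hy; subst hy
    exact (hb x ((Finset.mem_sort _).1 hx)).le

lemma gapProd_concat : ∀ (l : List ℕ) (p b : ℕ),
    gapProd p (l ++ [b]) = gapProd p l * qnum (b - l.getLastD p - 1)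
  | [], p, b => by simp [gapProd]
  | s :: rest, p, b => by
      show qnum (s - p - 1) * gapProd s (rest ++ [b]) = _
      rw [gapProd_concat rest s b, List.getLastD_cons]
      show _ = qnum (s - p - 1) * gapProd s rest * _
      ring

lemma phi_of_valid (n : ℕ) (S : Finset ℕ) (h1 : S ⊆ Finset.Icc 2 (n - 1))
    (h2 : NoTwoConsec S) :
    phi n S = X ^ S.card * gapProd 0 (S.sort (· ≤ ·)) * qnum (n - S.sup id) := by
  rw [phi, if_pos ⟨h1, h2⟩]
  by_cases h : n - 1 ∈ S
  · rw [if_pos h]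
    have hb : 2 ≤ n - 1 := (Finset.mem_Icc.1 (h1 h)).1
    have hsup : S.sup id = n - 1 := by
      refine le_antisymm (Finset.sup_le fun x hx => (Finset.mem_Icc.1 (h1 hx)).2) ?_
      exact Finset.le_sup (f := id) h
    rw [hsup]
    have : n - (n - 1) = 1 := by omega
    rw [this, qnum_one]
  · rw [if_neg h]

lemma phi_of_invalid (n : ℕ) (S : Finset ℕ)
    (h : ¬(S ⊆ Finset.Icc 2 (n - 1) ∧ NoTwoConsec S)) : phi n S = 0 := if_neg h

lemma sup_eq_of_mem_max {S : Finset ℕ} {v : ℕ} (hv : v ∈ S) (hmax : ∀ x ∈ S, x ≤ v) :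
    S.sup id = v :=
  le_antisymm (Finset.sup_le hmax) (Finset.le_sup (f := id) hv)

lemma phi_rec (m : ℕ) (S : Finset ℕ) :
    phi (m + 3) S =
      if m + 2 ∈ S then
        (if m + 1 ∈ S.erase (m + 2) then 0 else X * phi (m + 1) (S.erase (m + 2)))
      else (1 + X) * phi (m + 2) S - (if m + 1 ∈ S then 0 else X * phi (m + 1) S) := by
  by_cases hA : m + 2 ∈ S
  · rw [if_pos hA]
    set S' := S.erase (m + 2) with hS'
    by_cases hA1 : m + 1 ∈ S'
    · -- consecutive: phi (m+3) S = 0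
      rw [if_pos hA1]
      apply phi_of_invalid
      rintro ⟨-, h2⟩
      exact h2 (m + 1) (Finset.mem_of_mem_erase hA1) hA
    · rw [if_neg hA1]
      have hA1' : m + 1 ∉ S := fun h => hA1 (Finset.mem_erase.2 ⟨by omega, h⟩)
      by_cases hv : S' ⊆ Finset.Icc 2 ((m + 1) - 1) ∧ NoTwoConsec S'
      · obtain ⟨hv1, hv2⟩ := hv
        have hS'le : ∀ x ∈ S', x ≤ m := fun x hx => by
          have := (Finset.mem_Icc.1 (hv1 hx)).2; omega
        -- validity of S for m+3
        have hval1 : S ⊆ Finset.Icc 2 ((m + 3) - 1) := by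
          intro x hx
          rcases eq_or_ne x (m + 2) with rfl | hne
          · rw [Finset.mem_Icc]; omega
          · have hx' : x ∈ S' := Finset.mem_erase.2 ⟨hne, hx⟩
            have := Finset.mem_Icc.1 (hv1 hx')
            rw [Finset.mem_Icc]; omega
        have hval2 : NoTwoConsec S := by
          intro i hi hi1
          rcases eq_or_ne i (m + 2) with rfl | hne
          · have := Finset.mem_Icc.1 (hval1 hi1); omega
          · have hi' : i ∈ S' := Finset.mem_erase.2 ⟨hne, hi⟩
            rcases eq_or_ne (i + 1) (m + 2) with heq | hne1
            · have : i = m + 1 := by omega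
              subst this; exact hA1' hi
            · exact hv2 i hi' (Finset.mem_erase.2 ⟨hne1, hi1⟩)
        rw [phi_of_valid _ _ hval1 hval2, phi_of_valid _ _ hv1 hv2]
        have hins : S = insert (m + 2) S' := (Finset.insert_erase hA).symm
        have hsort : S.sort (· ≤ ·) = S'.sort (· ≤ ·) ++ [m + 2] := by
          conv_lhs => rw [hins]
          exact sort_insert_max (fun x hx => by have := hS'le x hx; omega)
        have hsup : S.sup id = m + 2 := sup_eq_of_mem_max hA
          (fun x hx => (Finset.mem_Icc.1 (hval1 hx)).2)
        have hcard : S.card = S'.card + 1 := by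
          rw [hins, Finset.card_insert_of_notMem (Finset.notMem_erase _ _)]
        have hsupS' : S'.sup id ≤ m := by
          rcases S'.eq_empty_or_nonempty with he | hne
          · rw [he]; simp
          · exact Finset.sup_le fun x hx => hS'le x hx
        rw [hsort, gapProd_concat, hsup, hcard, ← sup_id_eq_getLastD]
        have h1 : m + 3 - (m + 2) = 1 := by omega
        have h2 : m + 2 - S'.sup id - 1 = m + 1 - S'.sup id := by omega
        rw [h1, h2, qnum_one]
        ring
      · have hvS : ¬(S ⊆ Finset.Icc 2 ((m + 3) - 1) ∧ NoTwoConsec S) := by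
          rintro ⟨h1, h2⟩
          apply hv
          constructor
          · intro x hx
            obtain ⟨hne, hxS⟩ := Finset.mem_erase.1 hx
            have := Finset.mem_Icc.1 (h1 hxS)
            have hxne : x ≠ m + 1 := fun h => hA1' (h ▸ hxS)
            rw [Finset.mem_Icc]; omega
          · intro i hi hi1
            exact h2 i (Finset.mem_of_mem_erase hi) (Finset.mem_of_mem_erase hi1)
        rw [phi_of_invalid _ _ hvS, phi_of_invalid _ _ hv, mul_zero]
  · rw [if_neg hA]
    by_cases hB : m + 1 ∈ S
    · rw [if_pos hB]
      by_cases hv : S ⊆ Finset.Icc 2 ((m + 2) - 1) ∧ NoTwoConsec S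
      · obtain ⟨hv1, hv2⟩ := hv
        have hval1 : S ⊆ Finset.Icc 2 ((m + 3) - 1) := by
          intro x hx; have := Finset.mem_Icc.1 (hv1 hx); rw [Finset.mem_Icc]; omega
        rw [phi_of_valid _ _ hval1 hv2, phi_of_valid _ _ hv1 hv2]
        have hsup : S.sup id = m + 1 := sup_eq_of_mem_max hB
          (fun x hx => (Finset.mem_Icc.1 (hv1 hx)).2)
        rw [hsup]
        have h1 : m + 3 - (m + 1) = 2 := by omega
        have h2 : m + 2 - (m + 1) = 1 := by omega
        rw [h1, h2, qnum_one]
        have : qnum 2 = 1 + X := by rw [show (2:ℕ) = 1 + 1 from rfl, qnum_succ, qnum_one]; ring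
        rw [this]; ring
      · have hvS : ¬(S ⊆ Finset.Icc 2 ((m + 3) - 1) ∧ NoTwoConsec S) := by
          rintro ⟨h1, h2⟩
          apply hv
          refine ⟨fun x hx => ?_, h2⟩
          have := Finset.mem_Icc.1 (h1 hx)
          have : x ≠ m + 2 := fun h => hA (h ▸ hx)
          have := Finset.mem_Icc.1 (h1 hx)
          rw [Finset.mem_Icc]; omega
        rw [phi_of_invalid _ _ hvS, phi_of_invalid _ _ hv]
        ring
    · rw [if_neg hB]
      by_cases hv : S ⊆ Finset.Icc 2 ((m + 1) - 1) ∧ NoTwoConsec S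
      · obtain ⟨hv1, hv2⟩ := hv
        have hle : ∀ x ∈ S, x ≤ m := fun x hx => by
          have := (Finset.mem_Icc.1 (hv1 hx)).2; omega
        have hval2 : S ⊆ Finset.Icc 2 ((m + 2) - 1) := fun x hx => by
          have := Finset.mem_Icc.1 (hv1 hx); rw [Finset.mem_Icc]; omega
        have hval3 : S ⊆ Finset.Icc 2 ((m + 3) - 1) := fun x hx => by
          have := Finset.mem_Icc.1 (hv1 hx); rw [Finset.mem_Icc]; omega
        rw [phi_of_valid _ _ hval3 hv2, phi_of_valid _ _ hval2 hv2,
          phi_of_valid _ _ hv1 hv2]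
        have hsup : S.sup id ≤ m := by
          rcases S.eq_empty_or_nonempty with rfl | hne
          · simp
          · exact Finset.sup_le hle
        set s := S.sup id
        have e3 : m + 3 - s = (m - s) + 3 := by omega
        have e2 : m + 2 - s = (m - s) + 2 := by omega
        have e1 : m + 1 - s = (m - s) + 1 := by omega
        rw [e3, e2, e1, show (m - s) + 3 = ((m - s) + 1) + 2 from rfl, qnum_rec]
        ring
      · have hinv : ∀ k, m + 1 ≤ k → ¬(S ⊆ Finset.Icc 2 (k - 1) ∧ NoTwoConsec S) → True := fun _ _ _ => trivial
        have hvS3 : ¬(S ⊆ Finset.Icc 2 ((m + 3) - 1) ∧ NoTwoConsec S) := by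
          rintro ⟨h1, h2⟩
          apply hv
          refine ⟨fun x hx => ?_, h2⟩
          have := Finset.mem_Icc.1 (h1 hx)
          have hx2 : x ≠ m + 2 := fun h => hA (h ▸ hx)
          have hx1 : x ≠ m + 1 := fun h => hB (h ▸ hx)
          rw [Finset.mem_Icc]; omega
        have hvS2 : ¬(S ⊆ Finset.Icc 2 ((m + 2) - 1) ∧ NoTwoConsec S) := by
          rintro ⟨h1, h2⟩
          apply hv
          refine ⟨fun x hx => ?_, h2⟩
          have := Finset.mem_Icc.1 (h1 hx)
          have hx1 : x ≠ m + 1 := fun h => hB (h ▸ hx)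
          rw [Finset.mem_Icc]; omega
        rw [phi_of_invalid _ _ hvS3, phi_of_invalid _ _ hvS2, phi_of_invalid _ _ hv]
        ring


open scoped Classical in
noncomputable def Fgen (m : ℕ) (S : Finset ℕ) : Polynomial ℤ :=
  ∑ w ∈ Finset.univ.filter (fun w : Fin m → Mark => IsW (m + 1) w ∧ DotSet (m + 1) w = S),
    (X : Polynomial ℤ) ^ cro (m + 1) w

open scoped Classical in
noncomputable def Ggen (m : ℕ) (S : Finset ℕ) : Polynomial ℤ :=
  ∑ w ∈ Finset.univ.filter (fun w : Fin m → Mark =>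
      (IsW (m + 1) w ∧ DotSet (m + 1) w = S) ∧ letterAt w m = Mark.cross),
    (X : Polynomial ℤ) ^ cro (m + 1) w

lemma letterAt_pos {m : ℕ} (w : Fin m → Mark) (i : ℕ) (h1 : 1 ≤ i) (h2 : i ≤ m) :
    letterAt w i = w ⟨i - 1, by omega⟩ := dif_pos ⟨h1, h2⟩

lemma letterAt_out {m : ℕ} (w : Fin m → Mark) (i : ℕ) (h : ¬(1 ≤ i ∧ i ≤ m)) :
    letterAt w i = Mark.blank := dif_neg h

lemma letterAt_snoc_lt {m : ℕ} (v : Fin m → Mark) (a : Mark) (i : ℕ) (h2 : i ≤ m) :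
    letterAt (Fin.snoc v a : Fin (m + 1) → Mark) i = letterAt v i := by
  rcases Nat.eq_zero_or_pos i with rfl | h1
  · rw [letterAt_out _ _ (by omega), letterAt_out _ _ (by omega)]
  · rw [letterAt_pos _ i h1 (by omega), letterAt_pos _ i h1 h2]
    have : (⟨i - 1, by omega⟩ : Fin (m + 1)) = Fin.castSucc ⟨i - 1, by omega⟩ := rfl
    rw [this, Fin.snoc_castSucc]

lemma letterAt_snoc_last {m : ℕ} (v : Fin m → Mark) (a : Mark) :
    letterAt (Fin.snoc v a : Fin (m + 1) → Mark) (m + 1) = a := by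
  rw [letterAt_pos _ _ (by omega) (le_refl _)]
  have : (⟨m + 1 - 1, by omega⟩ : Fin (m + 1)) = Fin.last m := rfl
  rw [this, Fin.snoc_last]

lemma Icc_succ_insert (m : ℕ) : Finset.Icc 1 (m + 1) = insert (m + 1) (Finset.Icc 1 m) := by
  ext x; simp only [Finset.mem_Icc, Finset.mem_insert]; omega

lemma DotSet_subset (m : ℕ) (w : Fin m → Mark) : DotSet (m + 1) w ⊆ Finset.Icc 1 m :=
  Finset.filter_subset _ _

open scoped Classical in
lemma DotSet_snoc (m : ℕ) (v : Fin m → Mark) (a : Mark) :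
    DotSet (m + 2) (Fin.snoc v a : Fin (m + 1) → Mark) =
      if a = Mark.dot then insert (m + 1) (DotSet (m + 1) v) else DotSet (m + 1) v := by
  show (Finset.Icc 1 (m + 1)).filter _ = _
  rw [Icc_succ_insert, Finset.filter_insert]
  have hinner : ((Finset.Icc 1 m).filter fun i =>
      letterAt (Fin.snoc v a : Fin (m + 1) → Mark) i = Mark.dot) = DotSet (m + 1) v := by
    apply Finset.filter_congr
    intro i hi
    rw [letterAt_snoc_lt _ _ _ (Finset.mem_Icc.1 hi).2]
  rw [hinner, letterAt_snoc_last]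

open scoped Classical in
lemma cro_snoc (m : ℕ) (v : Fin m → Mark) (a : Mark) :
    cro (m + 2) (Fin.snoc v a : Fin (m + 1) → Mark) =
      cro (m + 1) v + (if a = Mark.cross then 1 else 0) := by
  show ((Finset.Icc 1 (m + 1)).filter _).card = _
  rw [Icc_succ_insert, Finset.filter_insert]
  have hinner : ((Finset.Icc 1 m).filter fun i =>
      letterAt (Fin.snoc v a : Fin (m + 1) → Mark) i = Mark.cross) =
      (Finset.Icc 1 m).filter fun i => letterAt v i = Mark.cross := by
    apply Finset.filter_congr
    intro i hi
    rw [letterAt_snoc_lt _ _ _ (Finset.mem_Icc.1 hi).2]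
  rw [hinner, letterAt_snoc_last]
  by_cases h : a = Mark.cross
  · rw [if_pos h, if_pos h, Finset.card_insert_of_notMem (by simp [Finset.mem_Icc])]
    rfl
  · rw [if_neg h, if_neg h, Nat.add_zero]
    rfl

lemma isW_snoc (m : ℕ) (v : Fin m → Mark) (a : Mark) :
    IsW (m + 2) (Fin.snoc v a : Fin (m + 1) → Mark) ↔
      IsW (m + 1) v ∧
        ((a = Mark.blank ∧ letterAt v m ≠ Mark.cross) ∨
         a = Mark.cross ∨
         (a = Mark.dot ∧ letterAt v m = Mark.cross)) := by
  constructor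
  · rintro ⟨hd, hc⟩
    have hv : IsW (m + 1) v := by
      constructor
      · intro i hi
        have hir : 1 ≤ i ∧ i ≤ m := by
          by_contra h
          rw [letterAt_out _ _ h] at hi; exact Mark.noConfusion hi
        have hi' : letterAt (Fin.snoc v a : Fin (m + 1) → Mark) i = Mark.dot := by
          rw [letterAt_snoc_lt _ _ _ hir.2]; exact hi
        obtain ⟨h2, hcr⟩ := hd i hi'
        refine ⟨h2, ?_⟩
        rw [← letterAt_snoc_lt v a (i - 1) (by omega)]; exact hcr
      · intro j hj hjc
        have hjr : 1 ≤ j ∧ j ≤ m := by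
          by_contra h
          rw [letterAt_out _ _ h] at hjc; exact Mark.noConfusion hjc
        have hj1 : j + 1 ≤ m := by
          have : (m + 1) - 2 = m - 1 := by omega
          rw [this] at hj; omega
        have hjc' : letterAt (Fin.snoc v a : Fin (m + 1) → Mark) j = Mark.cross := by
          rw [letterAt_snoc_lt _ _ _ hjr.2]; exact hjc
        have := hc j (by show j ≤ (m + 2) - 2; omega) hjc'
        rwa [letterAt_snoc_lt _ _ _ hj1] at this
    refine ⟨hv, ?_⟩
    cases a with
    | blank =>
        left
        refine ⟨rfl, fun hcr => ?_⟩
        have hm1 : 1 ≤ m := by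
          by_contra h
          rw [letterAt_out _ _ (by omega)] at hcr; exact Mark.noConfusion hcr
        have hcr' : letterAt (Fin.snoc v Mark.blank : Fin (m + 1) → Mark) m = Mark.cross := by
          rw [letterAt_snoc_lt _ _ _ (le_refl m)]; exact hcr
        have := hc m (by show m ≤ (m + 2) - 2; omega) hcr'
        rw [letterAt_snoc_last] at this
        rcases this with h | h <;> exact Mark.noConfusion h
    | cross => right; left; rfl
    | dot =>
        right; right
        refine ⟨rfl, ?_⟩
        have : letterAt (Fin.snoc v Mark.dot : Fin (m + 1) → Mark) (m + 1) = Mark.dot :=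
          letterAt_snoc_last v Mark.dot
        obtain ⟨h2, hcr⟩ := hd (m + 1) this
        have : m + 1 - 1 = m := by omega
        rw [this] at hcr
        rwa [letterAt_snoc_lt _ _ _ (le_refl m)] at hcr
  · rintro ⟨⟨hd, hc⟩, hcase⟩
    constructor
    · intro i hi
      rcases lt_trichotomy i (m + 1) with hlt | heq | hgt
      · have hi' : letterAt v i = Mark.dot := by
          rwa [letterAt_snoc_lt _ _ _ (by omega)] at hi
        obtain ⟨h2, hcr⟩ := hd i hi'
        refine ⟨h2, ?_⟩
        rw [letterAt_snoc_lt _ _ _ (by omega)]; exact hcr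
      · subst heq
        rw [letterAt_snoc_last] at hi
        have hvm : letterAt v m = Mark.cross := by
          rcases hcase with ⟨ha, -⟩ | ha | ⟨-, h⟩
          · rw [ha] at hi; exact absurd hi (by simp)
          · rw [ha] at hi; exact absurd hi (by simp)
          · exact h
        have hm1 : 1 ≤ m := by
          by_contra h
          rw [letterAt_out _ _ (by omega)] at hvm; exact Mark.noConfusion hvm
        refine ⟨by omega, ?_⟩
        have : m + 1 - 1 = m := by omega
        rw [this, letterAt_snoc_lt _ _ _ (le_refl m)]; exact hvm
      · rw [letterAt_out _ _ (by omega)] at hi; exact Mark.noConfusion hi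
    · intro j hj hjc
      have hj' : j ≤ m := by omega
      have hj1 : 1 ≤ j := by
        by_contra h
        rw [letterAt_out _ _ (by omega)] at hjc; exact Mark.noConfusion hjc
      have hjv : letterAt v j = Mark.cross := by
        rwa [letterAt_snoc_lt _ _ _ hj'] at hjc
      rcases lt_or_eq_of_le hj' with hlt | heq
      · have := hc j (by show j ≤ m + 1 - 2; omega) hjv
        rcases this with h | h
        · left; rw [letterAt_snoc_lt _ _ _ (by omega)]; exact h
        · right; rw [letterAt_snoc_lt _ _ _ (by omega)]; exact h
      · subst heq
        rcases hcase with ⟨-, hne⟩ | ha | ⟨ha, -⟩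
        · exact absurd hjv hne
        · subst ha; left; exact letterAt_snoc_last v Mark.cross
        · subst ha; right; exact letterAt_snoc_last v Mark.dot

def snocEquiv (m : ℕ) : ((Fin m → Mark) × Mark) ≃ (Fin (m + 1) → Mark) where
  toFun p := Fin.snoc p.1 p.2
  invFun w := (Fin.init w, w (Fin.last m))
  left_inv := by rintro ⟨v, a⟩; simp [Fin.init_snoc, Fin.snoc_last]
  right_inv := fun w => Fin.snoc_init_self w

lemma sum_mark {M : Type*} [AddCommMonoid M] (f : Mark → M) :
    ∑ a : Mark, f a = f Mark.dot + f Mark.cross + f Mark.blank := by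
  have h : (Finset.univ : Finset Mark) = {Mark.dot, Mark.cross, Mark.blank} := by decide
  rw [h, Finset.sum_insert (by decide), Finset.sum_insert (by decide), Finset.sum_singleton,
    add_assoc]

lemma mark_dot_ne_cross : Mark.dot ≠ Mark.cross := by decide
lemma mark_cross_ne_dot : Mark.cross ≠ Mark.dot := by decide
lemma mark_blank_ne_dot : Mark.blank ≠ Mark.dot := by decide
lemma mark_blank_ne_cross : Mark.blank ≠ Mark.cross := by decide

open scoped Classical in
lemma sum_dot (m : ℕ) (S : Finset ℕ) :
    (∑ v : Fin m → Mark,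
      if IsW (m + 2) (Fin.snoc v Mark.dot : Fin (m + 1) → Mark) ∧
          DotSet (m + 2) (Fin.snoc v Mark.dot : Fin (m + 1) → Mark) = S
        then (X : Polynomial ℤ) ^ cro (m + 2) (Fin.snoc v Mark.dot : Fin (m + 1) → Mark) else 0)
      = if m + 1 ∈ S then Ggen m (S.erase (m + 1)) else 0 := by
  by_cases hm : m + 1 ∈ S
  · rw [if_pos hm, Ggen, Finset.sum_filter]
    apply Finset.sum_congr rfl
    intro v _
    rw [cro_snoc, if_neg mark_dot_ne_cross]
    simp only [Nat.add_zero]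
    apply if_congr _ rfl rfl
    rw [isW_snoc, DotSet_snoc, if_pos rfl]
    have hnm : m + 1 ∉ DotSet (m + 1) v := fun h => by
      have := Finset.mem_Icc.1 (DotSet_subset m v h); omega
    constructor
    · rintro ⟨⟨hw, hdis⟩, hins⟩
      have hcr : letterAt v m = Mark.cross := by
        rcases hdis with ⟨h, -⟩ | h | ⟨-, h⟩
        · exact absurd h (by decide)
        · exact absurd h (by decide)
        · exact h
      refine ⟨⟨hw, ?_⟩, hcr⟩
      rw [← hins, Finset.erase_insert hnm]
    · rintro ⟨⟨hw, hds⟩, hcr⟩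
      refine ⟨⟨hw, Or.inr (Or.inr ⟨rfl, hcr⟩)⟩, ?_⟩
      rw [hds, Finset.insert_erase hm]
  · rw [if_neg hm]
    apply Finset.sum_eq_zero
    intro v _
    rw [if_neg]
    rintro ⟨-, hds⟩
    rw [DotSet_snoc, if_pos rfl] at hds
    exact hm (hds ▸ Finset.mem_insert_self _ _)

open scoped Classical in
lemma sum_cross (m : ℕ) (S : Finset ℕ) :
    (∑ v : Fin m → Mark,
      if IsW (m + 2) (Fin.snoc v Mark.cross : Fin (m + 1) → Mark) ∧
          DotSet (m + 2) (Fin.snoc v Mark.cross : Fin (m + 1) → Mark) = S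
        then (X : Polynomial ℤ) ^ cro (m + 2) (Fin.snoc v Mark.cross : Fin (m + 1) → Mark) else 0)
      = X * Fgen m S := by
  rw [Fgen, Finset.sum_filter, Finset.mul_sum]
  apply Finset.sum_congr rfl
  intro v _
  rw [cro_snoc, if_pos rfl, mul_ite, mul_zero]
  apply if_congr
  · rw [isW_snoc, DotSet_snoc, if_neg mark_cross_ne_dot]
    constructor
    · rintro ⟨⟨hw, -⟩, hds⟩; exact ⟨hw, hds⟩
    · rintro ⟨hw, hds⟩; exact ⟨⟨hw, Or.inr (Or.inl rfl)⟩, hds⟩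
  · rw [pow_succ, mul_comm]
  · rfl

open scoped Classical in
lemma sum_blank (m : ℕ) (S : Finset ℕ) :
    (∑ v : Fin m → Mark,
      if IsW (m + 2) (Fin.snoc v Mark.blank : Fin (m + 1) → Mark) ∧
          DotSet (m + 2) (Fin.snoc v Mark.blank : Fin (m + 1) → Mark) = S
        then (X : Polynomial ℤ) ^ cro (m + 2) (Fin.snoc v Mark.blank : Fin (m + 1) → Mark) else 0)
      = Fgen m S - Ggen m S := by
  rw [Fgen, Ggen, Finset.sum_filter, Finset.sum_filter, ← Finset.sum_sub_distrib]
  apply Finset.sum_congr rfl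
  intro v _
  rw [cro_snoc, if_neg mark_blank_ne_cross]
  simp only [Nat.add_zero]
  have hcond : (IsW (m + 2) (Fin.snoc v Mark.blank : Fin (m + 1) → Mark) ∧
      DotSet (m + 2) (Fin.snoc v Mark.blank : Fin (m + 1) → Mark) = S) ↔
      ((IsW (m + 1) v ∧ DotSet (m + 1) v = S) ∧ letterAt v m ≠ Mark.cross) := by
    rw [isW_snoc, DotSet_snoc, if_neg mark_blank_ne_dot]
    constructor
    · rintro ⟨⟨hw, hdis⟩, hds⟩
      have hne : letterAt v m ≠ Mark.cross := by
        rcases hdis with ⟨-, h⟩ | h | ⟨h, -⟩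
        · exact h
        · exact absurd h (by decide)
        · exact absurd h (by decide)
      exact ⟨⟨hw, hds⟩, hne⟩
    · rintro ⟨⟨hw, hds⟩, hne⟩
      exact ⟨⟨hw, Or.inl ⟨rfl, hne⟩⟩, hds⟩
  rw [if_congr hcond rfl rfl]
  by_cases hP : IsW (m + 1) v ∧ DotSet (m + 1) v = S
  · by_cases hQ : letterAt v m = Mark.cross
    · rw [if_neg (fun h => h.2 hQ), if_pos hP, if_pos ⟨hP, hQ⟩, sub_self]
    · rw [if_pos ⟨hP, hQ⟩, if_pos hP, if_neg (fun h => hQ h.2), sub_zero]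
  · rw [if_neg (fun h => hP h.1), if_neg hP, if_neg (fun h => hP h.1), sub_zero]

open scoped Classical in
lemma Fgen_succ (m : ℕ) (S : Finset ℕ) :
    Fgen (m + 1) S = (if m + 1 ∈ S then Ggen m (S.erase (m + 1)) else 0)
      + X * Fgen m S + (Fgen m S - Ggen m S) := by
  rw [Fgen, Finset.sum_filter]
  rw [← Equiv.sum_comp (snocEquiv m)
    (fun w => if IsW (m + 2) w ∧ DotSet (m + 2) w = S then (X : Polynomial ℤ) ^ cro (m + 2) w else 0)]
  rw [Fintype.sum_prod_type]
  dsimp only [snocEquiv, Equiv.coe_fn_mk]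
  erw [Finset.sum_congr rfl (fun v _ => sum_mark (fun a =>
    if IsW (m + 2) (Fin.snoc v a : Fin (m + 1) → Mark) ∧
        DotSet (m + 2) (Fin.snoc v a : Fin (m + 1) → Mark) = S
      then (X : Polynomial ℤ) ^ cro (m + 2) (Fin.snoc v a : Fin (m + 1) → Mark) else 0))]
  rw [Finset.sum_add_distrib, Finset.sum_add_distrib, sum_dot, sum_cross, sum_blank]

open scoped Classical in
lemma Ggen_succ (m : ℕ) (S : Finset ℕ) :
    Ggen (m + 1) S = X * Fgen m S := by
  rw [Ggen, Finset.sum_filter]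
  rw [← Equiv.sum_comp (snocEquiv m)
    (fun w => if (IsW (m + 2) w ∧ DotSet (m + 2) w = S) ∧ letterAt w (m + 1) = Mark.cross
      then (X : Polynomial ℤ) ^ cro (m + 2) w else 0)]
  rw [Fintype.sum_prod_type]
  dsimp only [snocEquiv, Equiv.coe_fn_mk]
  erw [Finset.sum_congr rfl (fun v _ => sum_mark (fun a =>
    if (IsW (m + 2) (Fin.snoc v a : Fin (m + 1) → Mark) ∧
        DotSet (m + 2) (Fin.snoc v a : Fin (m + 1) → Mark) = S) ∧
        letterAt (Fin.snoc v a : Fin (m + 1) → Mark) (m + 1) = Mark.cross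
      then (X : Polynomial ℤ) ^ cro (m + 2) (Fin.snoc v a : Fin (m + 1) → Mark) else 0))]
  have hdot : (∑ v : Fin m → Mark,
      if (IsW (m + 2) (Fin.snoc v Mark.dot : Fin (m + 1) → Mark) ∧
          DotSet (m + 2) (Fin.snoc v Mark.dot : Fin (m + 1) → Mark) = S) ∧
          letterAt (Fin.snoc v Mark.dot : Fin (m + 1) → Mark) (m + 1) = Mark.cross
        then (X : Polynomial ℤ) ^ cro (m + 2) (Fin.snoc v Mark.dot : Fin (m + 1) → Mark) else 0)
      = 0 := by
    apply Finset.sum_eq_zero; intro v _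
    rw [if_neg]
    rintro ⟨-, h⟩
    rw [letterAt_snoc_last] at h
    exact mark_dot_ne_cross h
  have hblank : (∑ v : Fin m → Mark,
      if (IsW (m + 2) (Fin.snoc v Mark.blank : Fin (m + 1) → Mark) ∧
          DotSet (m + 2) (Fin.snoc v Mark.blank : Fin (m + 1) → Mark) = S) ∧
          letterAt (Fin.snoc v Mark.blank : Fin (m + 1) → Mark) (m + 1) = Mark.cross
        then (X : Polynomial ℤ) ^ cro (m + 2) (Fin.snoc v Mark.blank : Fin (m + 1) → Mark) else 0)
      = 0 := by
    apply Finset.sum_eq_zero; intro v _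
    rw [if_neg]
    rintro ⟨-, h⟩
    rw [letterAt_snoc_last] at h
    exact mark_blank_ne_cross h
  have hcross : (∑ v : Fin m → Mark,
      if (IsW (m + 2) (Fin.snoc v Mark.cross : Fin (m + 1) → Mark) ∧
          DotSet (m + 2) (Fin.snoc v Mark.cross : Fin (m + 1) → Mark) = S) ∧
          letterAt (Fin.snoc v Mark.cross : Fin (m + 1) → Mark) (m + 1) = Mark.cross
        then (X : Polynomial ℤ) ^ cro (m + 2) (Fin.snoc v Mark.cross : Fin (m + 1) → Mark) else 0)
      = X * Fgen m S := by
    rw [← sum_cross m S]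
    apply Finset.sum_congr rfl
    intro v _
    apply if_congr _ rfl rfl
    constructor
    · rintro ⟨h, -⟩; exact h
    · intro h; exact ⟨h, letterAt_snoc_last v Mark.cross⟩
  rw [Finset.sum_add_distrib, Finset.sum_add_distrib, hdot, hblank, hcross]
  ring

instance : Unique (Fin 0 → Mark) :=
  ⟨⟨fun i => i.elim0⟩, fun w => funext fun i => i.elim0⟩

open scoped Classical in
lemma Fgen_zero (S : Finset ℕ) : Fgen 0 S = if S = ∅ then 1 else 0 := by
  rw [Fgen, Finset.sum_filter, Fintype.sum_unique]
  have hblank : ∀ i, letterAt (default : Fin 0 → Mark) i = Mark.blank :=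
    fun i => letterAt_out _ i (by omega)
  have hW : IsW 1 (default : Fin 0 → Mark) := by
    constructor
    · intro i hi; rw [hblank i] at hi; exact absurd hi (by decide)
    · intro j _ hj; rw [hblank j] at hj; exact absurd hj (by decide)
  have hD : DotSet 1 (default : Fin 0 → Mark) = ∅ := by
    show (Finset.Icc 1 0).filter _ = ∅
    rw [show Finset.Icc 1 0 = ∅ from rfl, Finset.filter_empty]
  have hc : cro 1 (default : Fin 0 → Mark) = 0 := by
    show ((Finset.Icc 1 0).filter _).card = 0
    rw [show Finset.Icc 1 0 = ∅ from rfl, Finset.filter_empty, Finset.card_empty]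
  rw [hc, pow_zero]
  by_cases h : S = ∅
  · rw [if_pos h, if_pos ⟨hW, by rw [hD, h]⟩]
  · rw [if_neg h, if_neg]
    rintro ⟨-, hds⟩
    exact h (hds ▸ hD ▸ rfl)

open scoped Classical in
lemma Ggen_zero (S : Finset ℕ) : Ggen 0 S = 0 := by
  rw [Ggen, Finset.sum_filter, Fintype.sum_unique]
  rw [if_neg]
  rintro ⟨-, h⟩
  rw [letterAt_out _ 0 (by omega)] at h
  exact mark_blank_ne_cross h

open scoped Classical in
lemma Fgen_vanish (m : ℕ) (S : Finset ℕ) (h : ¬ S ⊆ Finset.Icc 1 m) : Fgen m S = 0 := by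
  rw [Fgen]
  apply Finset.sum_eq_zero
  intro w hw
  rw [Finset.mem_filter] at hw
  exact absurd (hw.2.2 ▸ DotSet_subset m w) h

open scoped Classical in
lemma Ggen_vanish (m : ℕ) (S : Finset ℕ) (h : ¬ S ⊆ Finset.Icc 1 m) : Ggen m S = 0 := by
  rw [Ggen]
  apply Finset.sum_eq_zero
  intro w hw
  rw [Finset.mem_filter] at hw
  exact absurd (hw.2.1.2 ▸ DotSet_subset m w) h

open scoped Classical in
lemma key_lemma : ∀ (m : ℕ) (S : Finset ℕ), Fgen m S = phi (m + 1) S := by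
  intro m
  induction m using Nat.strong_induction_on with
  | _ m ih =>
    match m with
    | 0 =>
      intro S
      rw [Fgen_zero]
      by_cases h : S = ∅
      · subst h
        rw [if_pos rfl, phi, if_pos ⟨Finset.empty_subset _, fun i hi => absurd hi (Finset.notMem_empty i)⟩]
        simp [gapProd, qnum_one]
      · rw [if_neg h, phi_of_invalid]
        rintro ⟨h1, -⟩
        exact h (Finset.subset_empty.1 (by simpa using h1))
    | 1 =>
      intro S
      rw [Fgen_succ 0, Ggen_zero, Ggen_zero, Fgen_zero, ite_id]
      by_cases h : S = ∅
      · subst h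
        rw [if_pos rfl, phi, if_pos ⟨Finset.empty_subset _, fun i hi => absurd hi (Finset.notMem_empty i)⟩]
        simp only [Finset.card_empty, pow_zero, Finset.sort_empty, one_mul,
          Finset.notMem_empty, if_neg (Finset.notMem_empty 1), Finset.sup_empty]
        show 0 + X * 1 + (1 - 0) = gapProd 0 [] * qnum (2 - ⊥)
        show 0 + X * 1 + (1 - 0) = 1 * qnum 2
        rw [show (2 : ℕ) = 1 + 1 from rfl, qnum_succ, qnum_one]
        ring
      · rw [if_neg h, phi_of_invalid]
        · ring
        · rintro ⟨h1, -⟩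
          exact h (Finset.subset_empty.1 (by simpa using h1))
    | (m + 2) =>
      intro S
      rw [Fgen_succ (m + 1), Ggen_succ m (S.erase (m + 2)), Ggen_succ m S,
        ih (m + 1) (by omega) S, ih m (by omega) (S.erase (m + 2)), ih m (by omega) S,
        show m + 2 + 1 = m + 3 from rfl, phi_rec m S]
      by_cases hA : m + 2 ∈ S
      · rw [if_pos hA, if_pos hA]
        have h2 : phi (m + 2) S = 0 := by
          apply phi_of_invalid
          rintro ⟨h1, -⟩
          have := Finset.mem_Icc.1 (h1 hA); omega
        have h1 : phi (m + 1) S = 0 := by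
          apply phi_of_invalid
          rintro ⟨h1, -⟩
          have := Finset.mem_Icc.1 (h1 hA); omega
        by_cases hB : m + 1 ∈ S.erase (m + 2)
        · rw [if_pos hB]
          have h3 : phi (m + 1) (S.erase (m + 2)) = 0 := by
            apply phi_of_invalid
            rintro ⟨h1, -⟩
            have := Finset.mem_Icc.1 (h1 hB); omega
          rw [h1, h2, h3]; ring
        · rw [if_neg hB, h1, h2]; ring
      · rw [if_neg hA, if_neg hA]
        by_cases hB : m + 1 ∈ S
        · rw [if_pos hB]
          have h1 : phi (m + 1) S = 0 := by
            apply phi_of_invalid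
            rintro ⟨h1, -⟩
            have := Finset.mem_Icc.1 (h1 hB); omega
          rw [h1]; ring
        · rw [if_neg hB]; ring

open scoped Classical in
/-- For `n ≥ 2` and `S ⊆ [1, n-1]`:
`∑_{w ∈ W_n, Dot(w) = S} t^{cro(w)} = φ_{S,n}(t)`. -/
theorem W_genfun_eq_phi (n : ℕ) (hn : 2 ≤ n) (S : Finset ℕ)
    (hS : S ⊆ Finset.Icc 1 (n - 1)) :
    ∑ w ∈ Finset.univ.filter (fun w : Fin (n - 1) → Mark => IsW n w ∧ DotSet n w = S),
      (X : Polynomial ℤ) ^ cro n w = phi n S := by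
  obtain ⟨m, rfl⟩ : ∃ m, n = m + 1 := ⟨n - 1, by omega⟩
  exact key_lemma m S
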